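/- For all r ≥ 2 and every prime power q, s_{q^{2r}/q}(2r, 2r - 1) = 2r + 1. -/

import Mathlib

/-- `U` covers with radius `r`: every vector of `F_{q^m}^k` lies in the `F_{q^m}`-span
of an `F_q`-subspace of `U` of `F_q`-dimension at most `r`. -/
def RkCovers (K : Type*) {L : Type*} [Field K] [Field L] [Algebra K L]
    {ι : Type*} (U : Submodule K (ι → L)) (r : ℕ) : Prop :=
  ∀ v : ι → L, ∃ S : Submodule K (ι → L), S ≤ U ∧ Module.finrank K S ≤ r ∧
    v ∈ Submodule.span L (S : Set (ι → L))

/-- `U` is rank-`ρ`-saturating: it covers with radius `ρ` and `ρ` is minimal. -/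
def IsRankSat (K : Type*) {L : Type*} [Field K] [Field L] [Algebra K L]
    {ι : Type*} (U : Submodule K (ι → L)) (ρ : ℕ) : Prop :=
  RkCovers K U ρ ∧ ∀ r < ρ, ¬ RkCovers K U r

/-- `s_{q^m/q}(k, ρ)`: the minimal `F_q`-dimension of a rank-`ρ`-saturating
`[n,k]_{q^m/q}` system in `F_{q^m}^k`. -/
noncomputable def sMin (K L : Type*) [Field K] [Field L] [Algebra K L] (k ρ : ℕ) : ℕ :=
  sInf {n : ℕ | ∃ U : Submodule K (Fin k → L),
    Module.finrank K U = n ∧ Submodule.span L (U : Set (Fin k → L)) = ⊤ ∧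
      IsRankSat K U ρ}

open Submodule Module Finset

namespace RankSatAux

variable {K L : Type*} [Field K] [Field L] [Algebra K L]




section Sums
variable {kk : ℕ}

lemma sumK_apply (a : Fin kk → K) (j : Fin kk) :
    (∑ i, a i • (Pi.single i (1:L) : Fin kk → L)) j = algebraMap K L (a j) := by
  classical
  rw [Finset.sum_apply]
  have h : ∀ i : Fin kk, (a i • (Pi.single i (1:L) : Fin kk → L)) j
      = if i = j then algebraMap K L (a i) else 0 := by
    intro i
    by_cases h : i = j
    · subst h; simp [Pi.single_apply, Algebra.smul_def]
    · simp [Pi.single_apply, Ne.symm h, h]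
  rw [Finset.sum_congr rfl (fun i _ => h i), Finset.sum_ite_eq']
  simp

lemma sumL_eq (γ : Fin kk → L) :
    (∑ i, γ i • (Pi.single i (1:L) : Fin kk → L)) = γ := by
  classical
  funext j
  rw [Finset.sum_apply]
  have h : ∀ i : Fin kk, (γ i • (Pi.single i (1:L) : Fin kk → L)) j
      = if i = j then γ i else 0 := by
    intro i
    by_cases h : i = j
    · subst h; simp [Pi.single_apply]
    · simp [Pi.single_apply, Ne.symm h, h]
  rw [Finset.sum_congr rfl (fun i _ => h i), Finset.sum_ite_eq']
  simp

lemma sum_sub_smul (a a' : Fin kk → K) (cc : K) (w : Fin kk → L) :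
    ∑ i, algebraMap K L ((a - cc • a') i) * w i
      = (∑ i, algebraMap K L (a i) * w i)
        - algebraMap K L cc * ∑ i, algebraMap K L (a' i) * w i := by
  rw [Finset.mul_sum, ← Finset.sum_sub_distrib]
  refine Finset.sum_congr rfl fun i _ => ?_
  simp only [Pi.sub_apply, Pi.smul_apply, smul_eq_mul, map_sub, map_mul]
  ring

lemma sum_smul_smul (a : Fin kk → K) (cc : K) (w : Fin kk → L) :
    ∑ i, algebraMap K L ((cc • a) i) * w i
      = algebraMap K L cc * ∑ i, algebraMap K L (a i) * w i := by
  rw [Finset.mul_sum]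
  refine Finset.sum_congr rfl fun i _ => ?_
  simp only [Pi.smul_apply, smul_eq_mul, map_mul]
  ring

lemma dotsum {d : ℕ} (aa : Fin kk → K) (a : Fin d → Fin kk → K) (γ : Fin d → L)
    (hz : ∀ j, ∑ i, aa i * a j i = 0) :
    ∑ i, algebraMap K L (aa i) * (∑ j, γ j * algebraMap K L (a j i)) = 0 := by
  have h1 : ∀ i, algebraMap K L (aa i) * (∑ j, γ j * algebraMap K L (a j i))
      = ∑ j, γ j * algebraMap K L (aa i * a j i) := by
    intro i
    rw [Finset.mul_sum]
    refine Finset.sum_congr rfl fun j _ => ?_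
    rw [map_mul]; ring
  rw [Finset.sum_congr rfl (fun i _ => h1 i), Finset.sum_comm]
  have h2 : ∀ j, ∑ i, γ j * algebraMap K L (aa i * a j i) = 0 := by
    intro j
    rw [← Finset.mul_sum, ← map_sum, hz j, map_zero, mul_zero]
  rw [Finset.sum_congr rfl (fun j _ => h2 j), Finset.sum_const_zero]

end Sums

section Rank

variable {M : Type*} [AddCommGroup M] [Module K M]

lemma fr0 [FiniteDimensional K M] {n : ℕ} (f : Fin n → M) (s : Finset (Fin n))
    (h : ∀ i ∉ s, f i = 0) :
    finrank K (span K (Set.range f)) ≤ s.card := by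
  classical
  have h1 : Set.range f ⊆ insert 0 ↑(s.image f) := by
    rintro _ ⟨i, rfl⟩
    by_cases hi : i ∈ s
    · exact Set.mem_insert_of_mem _ (by simpa using Finset.mem_image_of_mem f hi)
    · rw [h i hi]; exact Set.mem_insert _ _
  have h2 : span K (Set.range f) ≤ span K ↑(s.image f) := by
    refine le_trans (span_mono h1) ?_
    rw [Submodule.span_insert_zero]
  have h3 : finrank K (span K ((s.image f : Finset M) : Set M)) ≤ (s.image f).card := by
    simpa [Set.finrank] using finrank_span_finset_le_card (R := K) (s.image f)
  exact le_trans (Submodule.finrank_mono h2) (le_trans h3 Finset.card_image_le)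

lemma exists_span_family [FiniteDimensional K M] (S : Submodule K M) :
    ∃ g : Fin (finrank K S) → M, (∀ j, g j ∈ S) ∧ span K (Set.range g) = S := by
  let b := Module.finBasis K S
  refine ⟨S.subtype ∘ b, fun j => (b j).2, ?_⟩
  rw [Set.range_comp, Submodule.span_image, b.span_eq, Submodule.map_subtype_top]

lemma exists1 [FiniteDimensional K M] {W : Submodule K M} (h : 1 ≤ finrank K W) :
    ∃ x ∈ W, x ≠ 0 := by
  rw [← Submodule.ne_bot_iff]
  intro hb
  rw [hb] at h
  rw [finrank_bot K M] at h
  omega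

lemma exists2 [FiniteDimensional K M] {W : Submodule K M} (h : 2 ≤ finrank K W) :
    ∃ x ∈ W, ∃ y ∈ W, x ≠ 0 ∧ y ∉ span K {x} := by
  obtain ⟨x, hxW, hx0⟩ := exists1 (K := K) (le_trans (by omega) h)
  by_contra h'
  push_neg at h'
  have hle : W ≤ span K {x} := fun y hy => h' x hxW y hy hx0
  have := le_trans (Submodule.finrank_mono (M := M) hle) (le_of_eq (finrank_span_singleton hx0))
  omega

lemma jk {kk d : ℕ} (a : Fin d → Fin kk → K) (e : ℕ) (h : d + e ≤ kk) :
    ∃ Z : Submodule K (Fin kk → K), e ≤ finrank K Z ∧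
      ∀ x ∈ Z, ∀ j, ∑ i, a j i * x i = 0 := by
  classical
  let F : (Fin kk → K) →ₗ[K] (Fin d → K) :=
    LinearMap.pi (fun j => ∑ i, a j i • LinearMap.proj i)
  refine ⟨LinearMap.ker F, ?_, ?_⟩
  · have h1 := LinearMap.finrank_range_add_finrank_ker F
    have h2 : finrank K (LinearMap.range F) ≤ d := by
      refine le_trans (Submodule.finrank_le _) ?_
      rw [Module.finrank_pi]
      simp
    rw [Module.finrank_pi] at h1
    simp only [Fintype.card_fin] at h1
    omega
  · intro x hx j
    have h3 := congrFun (LinearMap.mem_ker.mp hx) j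
    simpa [F, LinearMap.pi_apply, LinearMap.sum_apply, LinearMap.smul_apply,
      LinearMap.proj_apply, smul_eq_mul] using h3

end Rank





lemma fixedpt [Fintype K] [Fintype L] {t : L} (ht : t ^ Fintype.card K = t) :
    ∃ μ : K, algebraMap K L μ = t := by
  classical
  set q := Fintype.card K with hqdef
  have hq : 1 < q := Fintype.one_lt_card
  set P : Polynomial L := Polynomial.X ^ q - Polynomial.X with hP
  have hP0 : P ≠ 0 := by
    intro h
    have hc : P.coeff q = 1 := by
      rw [hP, Polynomial.coeff_sub, Polynomial.coeff_X_pow, Polynomial.coeff_X,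
        if_pos rfl, if_neg (show ¬ (1 = q) by omega), sub_zero]
    rw [h] at hc
    simp at hc
  have hdeg : P.natDegree ≤ q := by
    refine le_trans (Polynomial.natDegree_sub_le _ _) ?_
    simp [Polynomial.natDegree_X_pow, Polynomial.natDegree_X]
    omega
  have hamInj : Function.Injective (algebraMap K L) := (algebraMap K L).injective
  set img := Finset.univ.image (algebraMap K L) with himgdef
  have himg : img ⊆ P.roots.toFinset := by
    intro z hz
    obtain ⟨μ, -, hμ⟩ := Finset.mem_image.mp hz
    rw [Multiset.mem_toFinset, Polynomial.mem_roots hP0]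
    show P.eval z = 0
    rw [hP]
    simp only [Polynomial.eval_sub, Polynomial.eval_pow, Polynomial.eval_X]
    rw [← hμ, ← map_pow, FiniteField.pow_card, sub_self]
  have hcard : P.roots.toFinset.card ≤ q :=
    le_trans (Multiset.toFinset_card_le _) (le_trans (Polynomial.card_roots' P) hdeg)
  have himg_card : img.card = q := by
    rw [himgdef, Finset.card_image_of_injective _ hamInj, Finset.card_univ]
  have heq : img = P.roots.toFinset := Finset.eq_of_subset_of_card_le himg (by omega)
  have htmem : t ∈ P.roots.toFinset := by
    rw [Multiset.mem_toFinset, Polynomial.mem_roots hP0]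
    show P.eval t = 0
    rw [hP]
    simp only [Polynomial.eval_sub, Polynomial.eval_pow, Polynomial.eval_X]
    rw [ht, sub_self]
  rw [← heq] at htmem
  obtain ⟨μ, -, hμ⟩ := Finset.mem_image.mp htmem
  exact ⟨μ, hμ⟩

lemma pigeon [Fintype K] [Fintype L] (θ : L →ₗ[K] L) (hθ : Function.Injective θ)
    (hout : ∃ x0 : L, x0 ∉ Set.range (algebraMap K L)) :
    ∃ lam x y : L, lam ≠ 0 ∧ x ≠ 0 ∧ y ∉ span K {x} ∧
      θ x - lam * x ∈ span K {lam} ∧ θ y - lam * y ∈ span K {lam} := by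
  classical
  by_contra hno
  push_neg at hno
  set Q := Fintype.card K with hQdef
  set M := Fintype.card L with hMdef
  have hQ2 : 2 ≤ Q := Fintype.one_lt_card
  have hM2 : 2 ≤ M := Fintype.one_lt_card
  have hamInj : Function.Injective (algebraMap K L) := (algebraMap K L).injective
  set cond : L → L → Prop := fun lam x => lam ≠ 0 ∧ x ≠ 0 ∧ θ x - lam * x ∈ span K {lam}
    with hconddef
  set N := ∑ lam : L, (Finset.univ.filter (cond lam)).card with hNdef
  have hswap : N = ∑ x : L, (Finset.univ.filter (fun lam => cond lam x)).card := by
    simp only [hNdef, Finset.card_filter]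
    exact Finset.sum_comm
  -- upper bound per nonzero lam
  have hupper1 : ∀ lam : L, lam ≠ 0 → (Finset.univ.filter (cond lam)).card ≤ Q - 1 := by
    intro lam hlam
    rcases (Finset.univ.filter (cond lam)).eq_empty_or_nonempty with he | ⟨x₀, hx₀⟩
    · rw [he]; simp
    · rw [Finset.mem_filter] at hx₀
      obtain ⟨-, -, hx0ne, hx0mem⟩ := hx₀
      have hsub : (Finset.univ.filter (cond lam))
          ⊆ (Finset.univ.image (fun a : K => a • x₀)).erase 0 := by
        intro x hx
        rw [Finset.mem_filter] at hx
        obtain ⟨-, -, hxne, hxmem⟩ := hx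
        have hxspan : x ∈ span K {x₀} := by
          by_contra hcn
          exact (hno lam x₀ x hlam hx0ne hcn hx0mem) hxmem
        obtain ⟨a, ha⟩ := (Submodule.mem_span_singleton).mp hxspan
        exact Finset.mem_erase.mpr ⟨hxne,
          Finset.mem_image.mpr ⟨a, Finset.mem_univ _, ha⟩⟩
      have h0mem : (0 : L) ∈ Finset.univ.image (fun a : K => a • x₀) :=
        Finset.mem_image.mpr ⟨0, Finset.mem_univ _, zero_smul _ _⟩
      calc (Finset.univ.filter (cond lam)).card
          ≤ ((Finset.univ.image (fun a : K => a • x₀)).erase 0).card :=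
            Finset.card_le_card hsub
        _ = (Finset.univ.image (fun a : K => a • x₀)).card - 1 :=
            Finset.card_erase_of_mem h0mem
        _ ≤ Q - 1 := by
            have := Finset.card_image_le (f := fun a : K => a • x₀) (s := Finset.univ)
            rw [Finset.card_univ] at this
            omega
  -- the zero lam contributes nothing
  have hzerolam : (Finset.univ.filter (cond (0:L))).card = 0 := by
    rw [Finset.card_eq_zero, Finset.filter_eq_empty_iff]
    intro x _
    rw [hconddef]
    simp
  have hup : N ≤ (M - 1) * (Q - 1) := by
    rw [hNdef, ← Finset.add_sum_erase Finset.univ _ (Finset.mem_univ (0:L)), hzerolam, zero_add]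
    calc ∑ lam ∈ Finset.univ.erase (0:L), (Finset.univ.filter (cond lam)).card
        ≤ ∑ _lam ∈ Finset.univ.erase (0:L), (Q - 1) := by
          refine Finset.sum_le_sum ?_
          intro lam hlam
          exact hupper1 lam (Finset.mem_erase.mp hlam).1
      _ = (M - 1) * (Q - 1) := by
          rw [Finset.sum_const, Finset.card_erase_of_mem (Finset.mem_univ _), Finset.card_univ,
            smul_eq_mul]
  -- lower bound per nonzero x
  have hkey : ∀ x : L, x ≠ 0 →
      (Finset.univ.filter (fun μ : K => x + algebraMap K L μ ≠ 0)).card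
        ≤ (Finset.univ.filter (fun lam => cond lam x)).card := by
    intro x hx
    have hθx : θ x ≠ 0 := by
      intro h
      exact hx (hθ (by rw [h, map_zero]))
    refine Finset.card_le_card_of_injOn (fun μ => θ x / (x + algebraMap K L μ)) ?_ ?_
    · intro μ hμ
      rw [Finset.mem_coe, Finset.mem_filter] at hμ ⊢
      have hden : x + algebraMap K L μ ≠ 0 := hμ.2
      refine ⟨Finset.mem_univ _, div_ne_zero hθx hden, hx, ?_⟩
      have hexp : θ x = (θ x / (x + algebraMap K L μ)) * x
          + (θ x / (x + algebraMap K L μ)) * algebraMap K L μ := by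
        rw [← mul_add, div_mul_cancel₀ _ hden]
      rw [Submodule.mem_span_singleton]
      refine ⟨μ, ?_⟩
      rw [Algebra.smul_def]
      linear_combination -hexp
    · intro μ1 h1 μ2 h2 heq
      simp only [Finset.coe_filter, Set.mem_setOf_eq] at h1 h2
      have hd1 : x + algebraMap K L μ1 ≠ 0 := h1.2
      have hd2 : x + algebraMap K L μ2 ≠ 0 := h2.2
      rw [div_eq_div_iff hd1 hd2] at heq
      have := mul_left_cancel₀ hθx heq
      have h3 : algebraMap K L μ2 = algebraMap K L μ1 := by
        have := add_left_cancel this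
        exact this
      exact hamInj h3.symm
  have hDcard : ∀ x : L, x ≠ 0 →
      Q - 1 ≤ (Finset.univ.filter (fun μ : K => x + algebraMap K L μ ≠ 0)).card := by
    intro x hx
    have hneg : (Finset.univ.filter (fun μ : K => ¬ (x + algebraMap K L μ ≠ 0))).card ≤ 1 := by
      rw [Finset.card_le_one]
      intro μ1 h1 μ2 h2
      rw [Finset.mem_filter] at h1 h2
      have e1 : algebraMap K L μ1 = -x :=
        (neg_eq_of_add_eq_zero_right (not_not.mp h1.2)).symm
      have e2 : algebraMap K L μ2 = -x :=
        (neg_eq_of_add_eq_zero_right (not_not.mp h2.2)).symm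
      exact hamInj (e1.trans e2.symm)
    have htot := Finset.card_filter_add_card_filter_not
      (s := (Finset.univ : Finset K)) (p := fun μ => x + algebraMap K L μ ≠ 0)
    rw [Finset.card_univ] at htot
    omega
  obtain ⟨x₀, hx₀r⟩ := hout
  have hx₀0 : x₀ ≠ 0 := by
    intro h
    exact hx₀r ⟨0, by rw [map_zero, h]⟩
  have hDfull : (Finset.univ.filter (fun μ : K => x₀ + algebraMap K L μ ≠ 0)).card = Q := by
    rw [Finset.filter_true_of_mem, Finset.card_univ]
    intro μ _ h
    refine hx₀r ⟨-μ, ?_⟩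
    rw [map_neg]
    exact neg_eq_of_add_eq_zero_left h
  have hlow : (M - 2) * (Q - 1) + Q ≤ N := by
    rw [hswap]
    have hx₀e : x₀ ∈ Finset.univ.erase (0 : L) :=
      Finset.mem_erase.mpr ⟨hx₀0, Finset.mem_univ _⟩
    have step1 : ∑ x ∈ Finset.univ.erase (0:L), (Finset.univ.filter (fun lam => cond lam x)).card
        ≤ ∑ x : L, (Finset.univ.filter (fun lam => cond lam x)).card :=
      Finset.sum_le_sum_of_subset (Finset.erase_subset _ _)
    refine le_trans ?_ step1
    rw [← Finset.add_sum_erase _ _ hx₀e]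
    have hbx₀ : Q ≤ (Finset.univ.filter (fun lam => cond lam x₀)).card := by
      rw [← hDfull]
      exact hkey x₀ hx₀0
    have hrest : (M - 2) * (Q - 1)
        ≤ ∑ x ∈ (Finset.univ.erase (0:L)).erase x₀,
            (Finset.univ.filter (fun lam => cond lam x)).card := by
      have hcards : ((Finset.univ.erase (0:L)).erase x₀).card = M - 2 := by
        rw [Finset.card_erase_of_mem hx₀e, Finset.card_erase_of_mem (Finset.mem_univ _),
          Finset.card_univ]
        omega
      calc (M - 2) * (Q - 1)
          = ∑ _x ∈ (Finset.univ.erase (0:L)).erase x₀, (Q - 1) := by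
            rw [Finset.sum_const, hcards, smul_eq_mul]
        _ ≤ _ := by
            refine Finset.sum_le_sum ?_
            intro x hxm
            have hxne : x ≠ 0 := (Finset.mem_erase.mp (Finset.mem_of_mem_erase hxm)).1
            exact le_trans (by omega : Q - 1 ≤ Q - 1) (le_trans (hDcard x hxne) (hkey x hxne))
    omega
  have harith : (M - 1) * (Q - 1) = (M - 2) * (Q - 1) + (Q - 1) := by
    have h2 : M - 1 = (M - 2) + 1 := by omega
    rw [h2, add_mul, one_mul]
  omega

-- The saturating system
variable {kk : ℕ}

def Usys (c : Basis (Fin kk) K L) : Submodule K (Fin kk → L) :=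
  span K (insert (fun i => (c i : L))
    (Set.range fun i => (Pi.single i (1:L) : Fin kk → L)))

lemma single_mem_Usys (c : Basis (Fin kk) K L) (i : Fin kk) :
    (Pi.single i (1:L) : Fin kk → L) ∈ Usys c :=
  subset_span (Set.mem_insert_of_mem _ (Set.mem_range_self i))

lemma bvec_mem_Usys (c : Basis (Fin kk) K L) :
    (fun i => (c i : L)) ∈ Usys c :=
  subset_span (Set.mem_insert _ _)

lemma Kvec_mem_Usys (c : Basis (Fin kk) K L) (a : Fin kk → K) :
    (fun j => algebraMap K L (a j)) ∈ Usys c := by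
  have h : (fun j => algebraMap K L (a j))
      = ∑ i, a i • (Pi.single i (1:L) : Fin kk → L) := by
    funext j
    rw [sumK_apply]
  rw [h]
  exact Submodule.sum_mem _ fun i _ => Submodule.smul_mem _ _ (single_mem_Usys c i)

lemma spanL_Usys (c : Basis (Fin kk) K L) :
    span L ((Usys c : Set (Fin kk → L))) = ⊤ := by
  rw [Usys, Submodule.span_span_of_tower]
  rw [eq_top_iff]
  intro x _
  have hx : x = ∑ i, x i • (Pi.single i (1:L) : Fin kk → L) := (sumL_eq x).symm
  rw [hx]
  exact Submodule.sum_mem _ fun i _ => Submodule.smul_mem _ _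
    (subset_span (Set.mem_insert_of_mem _ (Set.mem_range_self i)))

lemma finrank_Usys [Fintype K] [Fintype L] (hkk : 2 ≤ kk) (c : Basis (Fin kk) K L) :
    finrank K (Usys c) = kk + 1 := by
  classical
  have hamInj : Function.Injective (algebraMap K L) := (algebraMap K L).injective
  set bv : Fin kk → L := fun i => (c i : L) with hbv
  set fam : Fin (kk + 1) → (Fin kk → L) :=
    Fin.cons bv (fun i => (Pi.single i (1:L) : Fin kk → L)) with hfam
  have hrange : Set.range fam
      = insert bv (Set.range fun i => (Pi.single i (1:L) : Fin kk → L)) := by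
    rw [hfam, Fin.range_cons]
  -- independence of the single family over K
  have hindE : LinearIndependent K (fun i => (Pi.single i (1:L) : Fin kk → L)) := by
    rw [Fintype.linearIndependent_iff]
    intro g hg i
    have := congrFun hg i
    rw [sumK_apply] at this
    simp only [Pi.zero_apply] at this
    exact hamInj (by rw [this, map_zero])
  have hbnotmem : bv ∉ span K (Set.range fun i => (Pi.single i (1:L) : Fin kk → L)) := by
    intro hmem
    obtain ⟨a, ha⟩ := (mem_span_range_iff_exists_fun K).mp hmem
    have hcoord : ∀ j, algebraMap K L (a j) = c j := by
      intro j
      have := congrFun ha j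
      rw [sumK_apply] at this
      exact this
    set i0 : Fin kk := ⟨0, by omega⟩ with hi0
    set i1 : Fin kk := ⟨1, by omega⟩ with hi1
    have hne : i0 ≠ i1 := by
      intro h
      have := congrArg Fin.val h
      simp [hi0, hi1] at this
    set g : Fin kk → K := fun i => if i = i0 then a i1 else if i = i1 then -(a i0) else 0
      with hg
    have hsum : ∑ i, g i • (c i : L) = g i0 • c i0 + g i1 • c i1 := by
      rw [← Finset.sum_subset (Finset.subset_univ ({i0, i1} : Finset (Fin kk)))]
      · rw [Finset.sum_pair hne]
      · intro x _ hx
        simp only [Finset.mem_insert, Finset.mem_singleton, not_or] at hx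
        rw [hg]
        simp [hx.1, hx.2]
    have hzero : ∑ i, g i • (c i : L) = 0 := by
      have e0 : g i0 = a i1 := by rw [hg]; simp
      have e1 : g i1 = -(a i0) := by rw [hg]; simp [hne.symm]
      rw [hsum, e0, e1, Algebra.smul_def, Algebra.smul_def, ← hcoord i0, ← hcoord i1, map_neg]
      ring
    have hg0 := Fintype.linearIndependent_iff.mp c.linearIndependent g hzero
    have ha1 : a i1 = 0 := by
      have := hg0 i0
      rw [hg] at this
      simpa using this
    have ha0 : a i0 = 0 := by
      have := hg0 i1
      rw [hg] at this
      simp only [if_neg hne.symm, if_pos rfl] at this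
      simpa using this
    have : (c i0 : L) = 0 := by
      rw [← hcoord i0, ha0, map_zero]
    exact c.ne_zero i0 this
  have hind : LinearIndependent K fam := by
    rw [hfam, linearIndependent_fin_cons]
    exact ⟨hindE, hbnotmem⟩
  have : Usys c = span K (Set.range fam) := by
    rw [Usys, hrange]
  rw [this, finrank_span_eq_card hind, Fintype.card_fin]



lemma psi_inj (c : Basis (Fin kk) K L) (w : Fin kk → K)
    (h : ∑ i, algebraMap K L (w i) * (c i : L) = 0) : w = 0 := by
  have h' : ∑ i, w i • (c i : L) = 0 := by
    rw [← h]
    exact Finset.sum_congr rfl fun i _ => (Algebra.smul_def _ _)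
  funext i
  exact Fintype.linearIndependent_iff.mp c.linearIndependent w h' i

lemma lowb [Fintype K] [Fintype L] (hkk : 1 ≤ kk) (c : Basis (Fin kk) K L)
    (U : Submodule K (Fin kk → L)) (hU : finrank K U = kk)
    (hspan : span L ((U : Set (Fin kk → L))) = ⊤) :
    ¬ RkCovers K U (kk - 1) := by
  classical
  intro hc
  obtain ⟨uu0, huu0U, huu0span⟩ := exists_span_family (K := K) U
  set uu : Fin kk → (Fin kk → L) := uu0 ∘ (finCongr hU.symm) with huu
  have hrangeuu : Set.range uu = Set.range uu0 := by
    rw [huu, Set.range_comp]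
    rw [Equiv.range_eq_univ, Set.image_univ]
  have huuU : ∀ i, uu i ∈ U := fun i => huu0U _
  have huuspan : span K (Set.range uu) = U := by rw [hrangeuu, huu0span]
  have hspanL : span L (Set.range uu) = ⊤ := by
    rw [← hspan, ← huuspan, Submodule.span_span_of_tower]
  have hLind : LinearIndependent L uu := by
    apply linearIndependent_of_top_le_span_of_card_eq_finrank
    · rw [hspanL]
    · rw [Fintype.card_fin, Module.finrank_pi, Fintype.card_fin]
  set v : Fin kk → L := ∑ i, (c i : L) • uu i with hv
  obtain ⟨S, hSU, hSd, hmem⟩ := hc v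
  obtain ⟨g, hgS, hgspan⟩ := exists_span_family (K := K) S
  -- coordinates of g j with respect to uu
  have hgU : ∀ j, g j ∈ U := fun j => hSU (hgS j)
  have hcoords : ∀ j, ∃ a : Fin kk → K, ∑ i, a i • uu i = g j := by
    intro j
    exact (mem_span_range_iff_exists_fun K).mp (huuspan ▸ hgU j)
  choose a ha using hcoords
  have hmem' : v ∈ span L (Set.range g) := by
    rw [← Submodule.span_span_of_tower (R := K), hgspan]
    exact hmem
  obtain ⟨γ, hγ⟩ := (mem_span_range_iff_exists_fun L).mp hmem'
  -- rewrite the combination in terms of uu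
  have hcomb : ∑ j, γ j • g j = ∑ i, (∑ j, γ j * algebraMap K L (a j i)) • uu i := by
    calc ∑ j, γ j • g j = ∑ j, ∑ i, (γ j * algebraMap K L (a j i)) • uu i := by
          refine Finset.sum_congr rfl fun j _ => ?_
          rw [← ha j, Finset.smul_sum]
          refine Finset.sum_congr rfl fun i _ => ?_
          rw [← algebraMap_smul L (a j i) (uu i), smul_smul]
      _ = ∑ i, ∑ j, (γ j * algebraMap K L (a j i)) • uu i := Finset.sum_comm
      _ = ∑ i, (∑ j, γ j * algebraMap K L (a j i)) • uu i := by
          refine Finset.sum_congr rfl fun i _ => ?_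
          rw [Finset.sum_smul]
  have hcc : ∀ i, (c i : L) = ∑ j, γ j * algebraMap K L (a j i) := by
    have h0 : ∑ i, ((c i : L) - ∑ j, γ j * algebraMap K L (a j i)) • uu i = 0 := by
      rw [Finset.sum_congr rfl
        (fun i _ => sub_smul (c i : L) (∑ j, γ j * algebraMap K L (a j i)) (uu i)),
        Finset.sum_sub_distrib]
      rw [← hv, ← hcomb, hγ]
      exact sub_self v
    intro i
    have := Fintype.linearIndependent_iff.mp hLind _ h0 i
    exact sub_eq_zero.mp this
  -- joint kernel
  have hdk : finrank K S + 1 ≤ kk := by omega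
  obtain ⟨Z, hZrank, hZperp⟩ := jk a 1 hdk
  obtain ⟨xx, hxxZ, hxx0⟩ := exists1 (K := K) hZrank
  have hzero : ∑ i, algebraMap K L (xx i) * (c i : L) = 0 := by
    have h1 : ∑ i, algebraMap K L (xx i) * (c i : L)
        = ∑ i, algebraMap K L (xx i) * (∑ j, γ j * algebraMap K L (a j i)) := by
      exact Finset.sum_congr rfl fun i _ => by rw [← hcc i]
    rw [h1]
    refine dotsum xx a γ (fun j => ?_)
    rw [Finset.sum_congr rfl (fun i _ => mul_comm (xx i) (a j i))]
    exact hZperp xx hxxZ j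
  exact hxx0 (psi_inj c xx hzero)





lemma covers [Fintype K] [Fintype L] (hkk : 2 ≤ kk) (c : Basis (Fin kk) K L) :
    RkCovers K (Usys c) (kk - 1) := by
  classical
  intro v
  have hamInj : Function.Injective (algebraMap K L) := (algebraMap K L).injective
  by_cases hdep : ∃ aa : Fin kk → K, aa ≠ 0 ∧ ∑ i, algebraMap K L (aa i) * v i = 0
  · -- CASE A : coordinates of v are K-linearly dependent
    obtain ⟨aa, ha0, hrel⟩ := hdep
    obtain ⟨i₁, hi₁⟩ := Function.ne_iff.mp ha0
    have hi₁' : aa i₁ ≠ 0 := by simpa using hi₁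
    set u : Fin kk → K := fun i => (aa i₁)⁻¹ * aa i with hu
    have hu1 : u i₁ = 1 := by rw [hu]; exact inv_mul_cancel₀ hi₁'
    have hurel : ∑ i, algebraMap K L (u i) * v i = 0 := by
      have h1 : ∀ i, algebraMap K L (u i) * v i
          = (algebraMap K L (aa i₁))⁻¹ * (algebraMap K L (aa i) * v i) := by
        intro i
        rw [hu]
        rw [map_mul, map_inv₀]
        ring
      rw [Finset.sum_congr rfl (fun i _ => h1 i), ← Finset.mul_sum, hrel, mul_zero]
    set t : Fin kk → (Fin kk → L) := fun i =>
      (Pi.single i (1:L) : Fin kk → L) - u i • (Pi.single i₁ (1:L) : Fin kk → L) with htdef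
    have ht1 : t i₁ = 0 := by
      rw [htdef]
      simp only [hu1, one_smul, sub_self]
    have htU : ∀ i, t i ∈ Usys c := fun i =>
      Submodule.sub_mem _ (single_mem_Usys c i)
        (Submodule.smul_mem _ _ (single_mem_Usys c i₁))
    have hsum : ∑ i, v i • t i = v := by
      rw [htdef]
      simp only [smul_sub]
      rw [Finset.sum_sub_distrib, sumL_eq]
      have h2 : ∀ i, v i • (u i • (Pi.single i₁ (1:L) : Fin kk → L))
          = (v i * algebraMap K L (u i)) • (Pi.single i₁ (1:L) : Fin kk → L) := by
        intro i
        rw [← algebraMap_smul L (u i), smul_smul]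
      rw [Finset.sum_congr rfl (fun i _ => h2 i), ← Finset.sum_smul]
      have h3 : ∑ i, v i * algebraMap K L (u i) = 0 := by
        rw [← hurel]
        exact Finset.sum_congr rfl fun i _ => mul_comm _ _
      rw [h3, zero_smul, sub_zero]
    refine ⟨span K (Set.range t), span_le.mpr ?_, ?_, ?_⟩
    · rintro _ ⟨i, rfl⟩
      exact htU i
    · have := fr0 (K := K) t (Finset.univ.erase i₁) ?_
      · refine le_trans this ?_
        rw [Finset.card_erase_of_mem (Finset.mem_univ _), Finset.card_univ, Fintype.card_fin]
      · intro i hi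
        have : i = i₁ := by
          by_contra h
          exact hi (Finset.mem_erase.mpr ⟨h, Finset.mem_univ _⟩)
        rw [this, ht1]
    · rw [← hsum]
      refine Submodule.sum_mem _ fun i _ => Submodule.smul_mem _ _ ?_
      exact Submodule.subset_span (Submodule.subset_span (Set.mem_range_self i))
  · -- CASE B : coordinates of v are K-linearly independent
    push_neg at hdep
    -- θ : the K-linear map x ↦ ⟨repr x, v⟩
    set θ : L →ₗ[K] L :=
      { toFun := fun x => ∑ i, c.repr x i • v i
        map_add' := by
          intro x y
          simp only [map_add, Finsupp.add_apply, add_smul, Finset.sum_add_distrib]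
        map_smul' := by
          intro m x
          simp only [map_smul, Finsupp.smul_apply, smul_eq_mul, RingHom.id_apply,
            ← Finset.smul_sum, mul_smul] } with hθdef
    have hθapp : ∀ x, θ x = ∑ i, algebraMap K L (c.repr x i) * v i := by
      intro x
      show ∑ i, c.repr x i • v i = ∑ i, algebraMap K L (c.repr x i) * v i
      exact Finset.sum_congr rfl fun i _ => Algebra.smul_def _ _
    have hθ0 : ∀ x, θ x = 0 → x = 0 := by
      intro x hx
      by_contra hx0
      have hne : (fun i => c.repr x i) ≠ 0 := by
        intro h
        apply hx0
        have : c.repr x = 0 := Finsupp.ext (fun i => congrFun h i)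
        have := congrArg (c.repr.symm) this
        simpa using this
      exact hdep (fun i => c.repr x i) hne (by rw [← hθapp x, hx])
    have hθinj : Function.Injective θ := by
      intro x y hxy
      have : θ (x - y) = 0 := by rw [map_sub, hxy, sub_self]
      have := hθ0 _ this
      exact sub_eq_zero.mp this
    have hout : ∃ x0 : L, x0 ∉ Set.range (algebraMap K L) := by
      by_contra hall
      push_neg at hall
      have hsurj : Function.Surjective (Algebra.linearMap K L) := by
        intro x
        obtain ⟨μ, hμ⟩ := hall x
        exact ⟨μ, hμ⟩
      have hinj : Function.Injective (Algebra.linearMap K L) := hamInj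
      have he : (K ≃ₗ[K] L) := LinearEquiv.ofBijective (Algebra.linearMap K L) ⟨hinj, hsurj⟩
      have h1 : finrank K L = 1 := by
        rw [← he.finrank_eq, finrank_self]
      have h2 : finrank K L = kk := by
        rw [finrank_eq_card_basis c, Fintype.card_fin]
      omega
    obtain ⟨lam, x, y, hlam0, hx0, hyns, hxmem, hymem⟩ := pigeon θ hθinj hout
    -- coordinates
    obtain ⟨a₁, ha₁⟩ : ∃ a : Fin kk → K, ∀ i, a i = c.repr x i := ⟨_, fun _ => rfl⟩
    obtain ⟨a₂, ha₂⟩ : ∃ a : Fin kk → K, ∀ i, a i = c.repr y i := ⟨_, fun _ => rfl⟩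
    have hsumx : ∑ i, algebraMap K L (a₁ i) * (c i : L) = x := by
      conv_rhs => rw [← c.sum_repr x]
      refine Finset.sum_congr rfl fun i _ => ?_
      rw [ha₁ i, Algebra.smul_def]
    have hsumy : ∑ i, algebraMap K L (a₂ i) * (c i : L) = y := by
      conv_rhs => rw [← c.sum_repr y]
      refine Finset.sum_congr rfl fun i _ => ?_
      rw [ha₂ i, Algebra.smul_def]
    have hθx' : θ x = ∑ i, algebraMap K L (a₁ i) * v i := by
      rw [hθapp x]
      exact Finset.sum_congr rfl fun i _ => by rw [ha₁ i]
    have hθy' : θ y = ∑ i, algebraMap K L (a₂ i) * v i := by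
      rw [hθapp y]
      exact Finset.sum_congr rfl fun i _ => by rw [ha₂ i]
    obtain ⟨μ₁, hμ₁⟩ := Submodule.mem_span_singleton.mp hxmem
    obtain ⟨μ₂, hμ₂⟩ := Submodule.mem_span_singleton.mp hymem
    -- the relation predicate
    set Rel : (Fin kk → K) → K → Prop := fun a μ =>
      ∑ i, algebraMap K L (a i) * v i
        = lam * ((∑ i, algebraMap K L (a i) * (c i : L)) + algebraMap K L μ) with hReldef
    have hRel₁ : Rel a₁ μ₁ := by
      rw [hReldef]
      show ∑ i, algebraMap K L (a₁ i) * v i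
        = lam * ((∑ i, algebraMap K L (a₁ i) * (c i : L)) + algebraMap K L μ₁)
      rw [hsumx, ← hθx']
      rw [Algebra.smul_def] at hμ₁
      linear_combination -hμ₁
    have hRel₂ : Rel a₂ μ₂ := by
      rw [hReldef]
      show ∑ i, algebraMap K L (a₂ i) * v i
        = lam * ((∑ i, algebraMap K L (a₂ i) * (c i : L)) + algebraMap K L μ₂)
      rw [hsumy, ← hθy']
      rw [Algebra.smul_def] at hμ₂
      linear_combination -hμ₂
    have hRelsub : ∀ a μ a' μ' (d : K), Rel a μ → Rel a' μ' → Rel (a - d • a') (μ - d * μ') := by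
      intro a μ a' μ' d h h'
      rw [hReldef] at h h' ⊢
      simp only at h h' ⊢
      rw [sum_sub_smul, sum_sub_smul, h, h', map_sub, map_mul]
      ring
    have hRelsmul : ∀ a μ (d : K), Rel a μ → Rel (d • a) (d * μ) := by
      intro a μ d h
      rw [hReldef] at h ⊢
      simp only at h ⊢
      rw [sum_smul_smul, sum_smul_smul, h, map_mul]
      ring
    -- a₁ ≠ 0 and a₂ not a multiple of a₁
    have ha₁0 : a₁ ≠ 0 := by
      intro h
      apply hx0
      rw [← c.sum_repr x]
      refine Finset.sum_eq_zero fun i _ => ?_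
      rw [← ha₁ i]
      have h5 := congrFun h i
      simp only [Pi.zero_apply] at h5
      rw [h5, zero_smul]
    have hnc : ∀ d : K, a₂ ≠ d • a₁ := by
      intro d h
      apply hyns
      rw [Submodule.mem_span_singleton]
      refine ⟨d, ?_⟩
      rw [← hsumx, ← hsumy, Finset.smul_sum]
      refine Finset.sum_congr rfl fun i _ => ?_
      have h6 : a₂ i = d * a₁ i := by
        have := congrFun h i
        simpa using this
      rw [h6, map_mul, Algebra.smul_def]
      ring
    -- pivoting
    obtain ⟨i₁, hi₁⟩ := Function.ne_iff.mp ha₁0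
    have h11 : a₁ i₁ ≠ 0 := by simpa using hi₁
    set d2 : K := a₂ i₁ * (a₁ i₁)⁻¹ with hd2
    set a₂' : Fin kk → K := a₂ - d2 • a₁ with ha₂'
    have hRel₂' : Rel a₂' (μ₂ - d2 * μ₁) := hRelsub _ _ _ _ _ hRel₂ hRel₁
    have ha₂'i₁ : a₂' i₁ = 0 := by
      rw [ha₂']
      simp only [Pi.sub_apply, Pi.smul_apply, smul_eq_mul, hd2]
      field_simp
      ring
    have ha₂'0 : a₂' ≠ 0 := by
      intro h
      exact hnc d2 (by rw [← sub_eq_zero]; rw [← ha₂'] at *; exact h)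
    obtain ⟨i₂, hi₂⟩ := Function.ne_iff.mp ha₂'0
    have h22 : a₂' i₂ ≠ 0 := by simpa using hi₂
    have hne12 : i₂ ≠ i₁ := by
      intro h
      rw [h, ha₂'i₁] at h22
      exact h22 rfl
    set u₂ : Fin kk → K := (a₂' i₂)⁻¹ • a₂' with hu₂
    set ν₂ : K := (a₂' i₂)⁻¹ * (μ₂ - d2 * μ₁) with hν₂
    have hRelu₂ : Rel u₂ ν₂ := hRelsmul _ _ _ hRel₂'
    have hu₂i₂ : u₂ i₂ = 1 := by
      rw [hu₂]
      simp only [Pi.smul_apply, smul_eq_mul]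
      exact inv_mul_cancel₀ h22
    have hu₂i₁ : u₂ i₁ = 0 := by
      rw [hu₂]
      simp only [Pi.smul_apply, smul_eq_mul, ha₂'i₁, mul_zero]
    set a₁' : Fin kk → K := a₁ - (a₁ i₂) • u₂ with ha₁'
    have hRel₁' : Rel a₁' (μ₁ - (a₁ i₂) * ν₂) := hRelsub _ _ _ _ _ hRel₁ hRelu₂
    have ha₁'i₂ : a₁' i₂ = 0 := by
      rw [ha₁']
      simp only [Pi.sub_apply, Pi.smul_apply, smul_eq_mul, hu₂i₂, mul_one, sub_self]
    have ha₁'i₁ : a₁' i₁ = a₁ i₁ := by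
      rw [ha₁']
      simp only [Pi.sub_apply, Pi.smul_apply, smul_eq_mul, hu₂i₁, mul_zero, sub_zero]
    set u₁ : Fin kk → K := (a₁ i₁)⁻¹ • a₁' with hu₁
    set ν₁ : K := (a₁ i₁)⁻¹ * (μ₁ - (a₁ i₂) * ν₂) with hν₁
    have hRelu₁ : Rel u₁ ν₁ := hRelsmul _ _ _ hRel₁'
    have hu₁i₁ : u₁ i₁ = 1 := by
      rw [hu₁]
      simp only [Pi.smul_apply, smul_eq_mul, ha₁'i₁]
      exact inv_mul_cancel₀ h11
    have hu₁i₂ : u₁ i₂ = 0 := by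
      rw [hu₁]
      simp only [Pi.smul_apply, smul_eq_mul, ha₁'i₂, mul_zero]
    -- the affine correction a₀
    set a₀ : Fin kk → K := fun i => if i = i₁ then ν₁ else if i = i₂ then ν₂ else 0 with ha₀
    have hdots : ∀ w : Fin kk → K, ∑ i, w i * a₀ i = w i₁ * ν₁ + w i₂ * ν₂ := by
      intro w
      rw [← Finset.sum_subset (Finset.subset_univ ({i₁, i₂} : Finset (Fin kk)))]
      · rw [Finset.sum_pair (Ne.symm hne12)]
        have e1 : a₀ i₁ = ν₁ := by rw [ha₀]; simp
        have e2 : a₀ i₂ = ν₂ := by rw [ha₀]; simp [hne12]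
        rw [e1, e2]
      · intro i _ hi
        simp only [Finset.mem_insert, Finset.mem_singleton, not_or] at hi
        have : a₀ i = 0 := by rw [ha₀]; simp [hi.1, hi.2]
        rw [this, mul_zero]
    -- the target decomposition
    set B : Fin kk → L := fun i => (c i : L) + algebraMap K L (a₀ i) with hB
    set z : Fin kk → L := fun i => v i - lam * B i with hz
    have hperp : ∀ (u : Fin kk → K) (ν : K), Rel u ν → (∑ i, u i * a₀ i = ν) →
        ∑ i, algebraMap K L (u i) * z i = 0 := by
      intro u ν hRel hdot
      have h1 : ∀ i, algebraMap K L (u i) * z i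
          = algebraMap K L (u i) * v i
            - lam * (algebraMap K L (u i) * (c i : L))
            - lam * (algebraMap K L (u i) * algebraMap K L (a₀ i)) := by
        intro i
        simp only [hz, hB]
        ring
      rw [Finset.sum_congr rfl (fun i _ => h1 i)]
      rw [Finset.sum_sub_distrib, Finset.sum_sub_distrib, ← Finset.mul_sum, ← Finset.mul_sum]
      have h2 : ∑ i, algebraMap K L (u i) * algebraMap K L (a₀ i) = algebraMap K L ν := by
        rw [← hdot, map_sum]
        exact Finset.sum_congr rfl fun i _ => (map_mul _ _ _).symm
      rw [h2]
      have hRel2 : ∑ i, algebraMap K L (u i) * v i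
          = lam * ((∑ i, algebraMap K L (u i) * (c i : L)) + algebraMap K L ν) := hRel
      rw [hRel2]
      ring
    have hperp₁ : ∑ i, algebraMap K L (u₁ i) * z i = 0 := by
      refine hperp u₁ ν₁ hRelu₁ ?_
      rw [hdots u₁, hu₁i₁, hu₁i₂]
      ring
    have hperp₂ : ∑ i, algebraMap K L (u₂ i) * z i = 0 := by
      refine hperp u₂ ν₂ hRelu₂ ?_
      rw [hdots u₂, hu₂i₁, hu₂i₂]
      ring
    -- the solved-form family
    set t : Fin kk → (Fin kk → L) := fun i =>
      (Pi.single i (1:L) : Fin kk → L)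
        - u₁ i • (Pi.single i₁ (1:L) : Fin kk → L)
        - u₂ i • (Pi.single i₂ (1:L) : Fin kk → L) with htdef
    have ht1 : t i₁ = 0 := by
      rw [htdef]
      simp [hu₁i₁, hu₂i₁]
    have ht2 : t i₂ = 0 := by
      rw [htdef]
      simp [hu₁i₂, hu₂i₂]
    have htU : ∀ i, t i ∈ Usys c := fun i =>
      Submodule.sub_mem _
        (Submodule.sub_mem _ (single_mem_Usys c i)
          (Submodule.smul_mem _ _ (single_mem_Usys c i₁)))
        (Submodule.smul_mem _ _ (single_mem_Usys c i₂))
    have hzsum : ∑ i, z i • t i = z := by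
      rw [htdef]
      simp only [smul_sub]
      rw [Finset.sum_sub_distrib, Finset.sum_sub_distrib, sumL_eq]
      have hgen : ∀ (j₀ : Fin kk) (u : Fin kk → K),
          (∑ i, algebraMap K L (u i) * z i = 0) →
          ∑ i, z i • (u i • (Pi.single j₀ (1:L) : Fin kk → L)) = 0 := by
        intro j₀ u hu
        have h2 : ∀ i, z i • (u i • (Pi.single j₀ (1:L) : Fin kk → L))
            = (z i * algebraMap K L (u i)) • (Pi.single j₀ (1:L) : Fin kk → L) := by
          intro i
          rw [← algebraMap_smul L (u i), smul_smul]
        rw [Finset.sum_congr rfl (fun i _ => h2 i), ← Finset.sum_smul]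
        have h3 : ∑ i, z i * algebraMap K L (u i) = 0 := by
          rw [← hu]
          exact Finset.sum_congr rfl fun i _ => mul_comm _ _
        rw [h3, zero_smul]
      rw [hgen i₁ u₁ hperp₁, hgen i₂ u₂ hperp₂, sub_zero, sub_zero]
    -- the covering subspace
    set T : Fin kk → (Fin kk → L) := Function.update t i₁ B with hT
    have hTU : ∀ i, T i ∈ Usys c := by
      intro i
      rw [hT]
      by_cases h : i = i₁
      · rw [h, Function.update_self]
        exact Submodule.add_mem _ (bvec_mem_Usys c) (Kvec_mem_Usys c a₀)
      · rw [Function.update_of_ne h]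
        exact htU i
    have hT2 : T i₂ = 0 := by
      rw [hT, Function.update_of_ne hne12, ht2]
    refine ⟨span K (Set.range T), span_le.mpr ?_, ?_, ?_⟩
    · rintro _ ⟨i, rfl⟩
      exact hTU i
    · have := fr0 (K := K) T (Finset.univ.erase i₂) ?_
      · refine le_trans this ?_
        rw [Finset.card_erase_of_mem (Finset.mem_univ _), Finset.card_univ, Fintype.card_fin]
      · intro i hi
        have : i = i₂ := by
          by_contra h
          exact hi (Finset.mem_erase.mpr ⟨h, Finset.mem_univ _⟩)
        rw [this, hT2]
    · have hv : v = lam • T i₁ + ∑ i, z i • t i := by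
        rw [hzsum, hT, Function.update_self]
        funext i
        rw [hz, hB]
        simp only [Pi.add_apply, Pi.smul_apply, smul_eq_mul]
        ring
      rw [hv]
      refine Submodule.add_mem _ ?_ ?_
      · exact Submodule.smul_mem _ _
          (Submodule.subset_span (Submodule.subset_span (Set.mem_range_self i₁)))
      · refine Submodule.sum_mem _ fun i _ => Submodule.smul_mem _ _ ?_
        by_cases h : i = i₁
        · rw [h, ht1]
          exact Submodule.zero_mem _
        · have : t i = T i := by rw [hT, Function.update_of_ne h]
          rw [this]
          exact Submodule.subset_span (Submodule.subset_span (Set.mem_range_self i))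

lemma minimal [Fintype K] [Fintype L] (hkk : 2 ≤ kk) (c : Basis (Fin kk) K L) :
    ¬ RkCovers K (Usys c) (kk - 2) := by
  classical
  intro hc
  set q := Fintype.card K with hq
  -- Frobenius setup
  set p := ringChar K with hp
  haveI : CharP K p := ringChar.charP K
  have hpprime : p.Prime := CharP.char_is_prime K p
  haveI : Fact p.Prime := ⟨hpprime⟩
  haveI : CharP L p := charP_of_injective_algebraMap
    (algebraMap K L).injective p
  haveI : ExpChar L p := ExpChar.prime hpprime
  obtain ⟨n, -, hcard⟩ := FiniteField.card K p
  set vb : Fin kk → L := fun i => (c i : L) ^ q with hvb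
  obtain ⟨S, hSU, hSd, hmem⟩ := hc vb
  obtain ⟨g, hgS, hgspan⟩ := exists_span_family (K := K) S
  -- decompose the generators
  have hgU : ∀ j, g j ∈ Usys c := fun j => hSU (hgS j)
  have hcoords : ∀ j, ∃ (cc : K) (a : Fin kk → K),
      ∀ i, g j i = algebraMap K L cc * (c i : L) + algebraMap K L (a i) := by
    intro j
    have hj := hgU j
    rw [Usys, Submodule.mem_span_insert] at hj
    obtain ⟨cc, z, hz, hgz⟩ := hj
    obtain ⟨a, haz⟩ := (mem_span_range_iff_exists_fun K).mp hz
    refine ⟨cc, a, fun i => ?_⟩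
    rw [hgz]
    have h1 : z i = algebraMap K L (a i) := by rw [← haz, sumK_apply]
    simp only [Pi.add_apply, Pi.smul_apply]
    rw [h1, Algebra.smul_def]
  choose cc a hga using hcoords
  have hmem' : vb ∈ span L (Set.range g) := by
    rw [← Submodule.span_span_of_tower (R := K), hgspan]
    exact hmem
  obtain ⟨γ, hγ⟩ := (mem_span_range_iff_exists_fun L).mp hmem'
  set lam : L := ∑ j, γ j * algebraMap K L (cc j) with hlam
  have hrel : ∀ i, (c i : L) ^ q = lam * (c i : L) + ∑ j, γ j * algebraMap K L (a j i) := by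
    intro i
    have h1 := congrFun hγ i
    rw [Finset.sum_apply] at h1
    have h2 : ∀ j, (γ j • g j) i = γ j * algebraMap K L (cc j) * (c i : L)
        + γ j * algebraMap K L (a j i) := by
      intro j
      rw [Pi.smul_apply, smul_eq_mul, hga j i]
      ring
    rw [Finset.sum_congr rfl (fun j _ => h2 j), Finset.sum_add_distrib,
      ← Finset.sum_mul] at h1
    rw [← hlam] at h1
    exact h1.symm
  -- joint kernel of the a's, 2-dimensional
  have hdk : finrank K S + 2 ≤ kk := by omega
  obtain ⟨Z, hZrank, hZperp⟩ := jk a 2 hdk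
  obtain ⟨xx, hxxZ, yy, hyyZ, hxx0, hyyns⟩ := exists2 (K := K) hZrank
  set X : L := ∑ i, algebraMap K L (xx i) * (c i : L) with hX
  set Y : L := ∑ i, algebraMap K L (yy i) * (c i : L) with hY
  have hXne : X ≠ 0 := fun h => hxx0 (psi_inj c xx (hX ▸ h))
  -- the key Frobenius computation
  have hfrob : ∀ (w : Fin kk → K), (∀ j, ∑ i, a j i * w i = 0) →
      (∑ i, algebraMap K L (w i) * (c i : L)) ^ q
        = lam * ∑ i, algebraMap K L (w i) * (c i : L) := by
    intro w hw
    have h1 : (∑ i, algebraMap K L (w i) * (c i : L)) ^ q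
        = ∑ i, (algebraMap K L (w i) * (c i : L)) ^ q := by
      rw [hq, hcard]
      exact sum_pow_char_pow (R := L) (p := p) (n := (n : ℕ)) Finset.univ _
    have h2 : ∀ i, (algebraMap K L (w i) * (c i : L)) ^ q
        = algebraMap K L (w i) * ((c i : L) ^ q) := by
      intro i
      rw [mul_pow, ← map_pow, hq, FiniteField.pow_card]
    rw [h1, Finset.sum_congr rfl (fun i _ => h2 i)]
    have h3 : ∀ i, algebraMap K L (w i) * ((c i : L) ^ q)
        = lam * (algebraMap K L (w i) * (c i : L))
          + algebraMap K L (w i) * ∑ j, γ j * algebraMap K L (a j i) := by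
      intro i
      rw [hrel i]
      ring
    rw [Finset.sum_congr rfl (fun i _ => h3 i), Finset.sum_add_distrib]
    have h4 : ∑ i, algebraMap K L (w i) * (∑ j, γ j * algebraMap K L (a j i)) = 0 := by
      refine dotsum w a γ (fun j => ?_)
      rw [Finset.sum_congr rfl (fun i _ => mul_comm (w i) (a j i))]
      exact hw j
    rw [h4, add_zero, ← Finset.mul_sum]
  have hXq : X ^ q = lam * X := hfrob xx (fun j => hZperp xx hxxZ j)
  have hYq : Y ^ q = lam * Y := hfrob yy (fun j => hZperp yy hyyZ j)
  have hlam0 : lam ≠ 0 := by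
    intro h0
    rw [h0, zero_mul] at hXq
    exact hXne (pow_eq_zero_iff (by positivity : q ≠ 0) |>.mp hXq)
  -- the ratio is fixed by the q-power map
  have hratq : (Y / X) ^ q = Y / X := by
    rw [div_pow, hXq, hYq, mul_div_mul_left _ _ hlam0]
  obtain ⟨μ, hμ⟩ := fixedpt (K := K) hratq
  have hYX : Y = algebraMap K L μ * X := by
    rw [hμ, div_mul_cancel₀ _ hXne]
  -- transfer back down to K
  have hyyxx : yy - μ • xx = 0 := by
    apply psi_inj c
    have : ∑ i, algebraMap K L ((yy - μ • xx) i) * (c i : L)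
        = Y - algebraMap K L μ * X := by
      rw [hY, hX, Finset.mul_sum, ← Finset.sum_sub_distrib]
      refine Finset.sum_congr rfl fun i _ => ?_
      simp only [Pi.sub_apply, Pi.smul_apply, smul_eq_mul, map_sub, map_mul]
      ring
    rw [this, hYX, sub_self]
  have : yy ∈ span K {xx} := by
    rw [Submodule.mem_span_singleton]
    exact ⟨μ, (sub_eq_zero.mp hyyxx).symm⟩
  exact hyyns this


end RankSatAux

open Submodule Module Finset RankSatAux

/-- For all `r ≥ 2` and every prime power `q`: `s_{q^{2r}/q}(2r, 2r-1) = 2r + 1`. -/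
theorem sMin_two_r (K L : Type*) [Field K] [Field L] [Algebra K L]
    [Fintype K] [Fintype L] {r : ℕ}
    (hr : 2 ≤ r) (hm : Module.finrank K L = 2 * r) :
    sMin K L (2 * r) (2 * r - 1) = 2 * r + 1 := by
  classical
  have hk2 : 2 ≤ 2 * r := by omega
  set c : Basis (Fin (2 * r)) K L := (Module.finBasis K L).reindex (finCongr hm) with hc
  have hmem : (2 * r + 1) ∈ {n : ℕ | ∃ U : Submodule K (Fin (2 * r) → L),
      Module.finrank K U = n ∧ Submodule.span L (U : Set (Fin (2 * r) → L)) = ⊤ ∧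
        IsRankSat K U (2 * r - 1)} := by
    refine ⟨Usys c, ?_, spanL_Usys c, ?_, ?_⟩
    · rw [finrank_Usys hk2 c]
    · exact covers hk2 c
    · intro r' hr' hcov
      have hcov2 : RkCovers K (Usys c) (2 * r - 2) := by
        intro v
        obtain ⟨S, h1, h2, h3⟩ := hcov v
        exact ⟨S, h1, le_trans h2 (by omega), h3⟩
      exact minimal hk2 c hcov2
  rw [sMin]
  apply le_antisymm
  · exact Nat.sInf_le hmem
  · refine le_csInf ⟨_, hmem⟩ ?_
    rintro n ⟨U, hdim, hspan, hsat⟩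
    by_contra hlt
    push_neg at hlt
    have h2r : 2 * r ≤ n := by
      obtain ⟨g, hgU, hgspan⟩ := exists_span_family (K := K) U
      have hsp : span L (Set.range g) = ⊤ := by
        rw [← Submodule.span_span_of_tower (R := K), hgspan, hspan]
      have hfr := fr0 (K := L) g Finset.univ (fun i hi => absurd (Finset.mem_univ i) hi)
      rw [Finset.card_univ, Fintype.card_fin] at hfr
      rw [hsp] at hfr
      rw [finrank_top, Module.finrank_pi, Fintype.card_fin] at hfr
      omega
    have hn : Module.finrank K U = 2 * r := by omega
    exact lowb (by omega) c U hn hspan hsat.1
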